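/- Let {X_n} be a sequence of random variables taking values in the nonnegative integers, and let X be a Poisson random variable with rate λ > 0. If for every k ≥ 0, lim_{n→∞} E[X_n (X_n − 1)⋯(X_n − k)] = λ^{k+1}, then X_n converges to X in distribution. -/

import Mathlib

open MeasureTheory Filter

lemma cast_descFactorial_prod (x r : ℕ) :
    ((x.descFactorial r : ℝ)) = ∏ i ∈ Finset.range r, ((x:ℝ) - i) := by
  induction r with
  | zero => simp
  | succ r ih =>
    rw [Finset.prod_range_succ, ← ih, Nat.descFactorial_succ]
    rcases le_or_gt r x with h | h
    · push_cast [h]; ring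
    · rw [Nat.descFactorial_eq_zero_iff_lt.mpr h]
      simp

lemma choose_mul_choose_cast (x j M : ℕ) :
    ((x.choose j : ℝ)) * ((x - j).choose M) = (x.choose (j+M)) * ((j+M).choose j) := by
  rcases lt_or_ge x j with h | h
  · rw [Nat.choose_eq_zero_of_lt h, Nat.choose_eq_zero_of_lt (h.trans_le (Nat.le_add_right j M))]
    simp
  rcases lt_or_ge x (j + M) with h2 | h2
  · rw [Nat.choose_eq_zero_of_lt h2, Nat.choose_eq_zero_of_lt (by omega : x - j < M)]
    simp
  · rw [Nat.cast_choose ℝ h, Nat.cast_choose ℝ (by omega : M ≤ x - j),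
      Nat.cast_choose ℝ h2, Nat.cast_choose ℝ (Nat.le_add_right j M)]
    have e1 : x - j - M = x - (j + M) := by omega
    have e2 : j + M - j = M := by omega
    rw [e1, e2]
    have hne : ∀ n : ℕ, (Nat.factorial n : ℝ) ≠ 0 := fun n => Nat.cast_ne_zero.2 (Nat.factorial_ne_zero n)
    field_simp

lemma keyA (j y : ℕ) : ∀ M, ∑ s ∈ Finset.range (M+1),
      (-1:ℝ)^s * (((j+s).choose j : ℕ) : ℝ) * (((j+1+y).choose (j+s) : ℕ) : ℝ)
    = (-1:ℝ)^M * (((j+1+y).choose j : ℕ) : ℝ) * ((y.choose M : ℕ) : ℝ) := by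
  intro M
  induction M with
  | zero => simp
  | succ M ih =>
    rw [Finset.sum_range_succ, ih]
    have hsub : (j+1+y) - j = y + 1 := by omega
    have h1 : (((j+1+y).choose j : ℕ) : ℝ) * (((y+1).choose (M+1) : ℕ) : ℝ)
        = (((j+1+y).choose (j+(M+1)) : ℕ) : ℝ) * (((j+(M+1)).choose j : ℕ) : ℝ) := by
      have := choose_mul_choose_cast (j+1+y) j (M+1); rwa [hsub] at this
    have h2 : (((y+1).choose (M+1) : ℕ) : ℝ) = ((y.choose M : ℕ) : ℝ) + ((y.choose (M+1) : ℕ) : ℝ) := by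
      rw [Nat.choose_succ_succ]; push_cast; ring
    rw [h2] at h1
    linear_combination ((-1:ℝ)^M) * h1

lemma key (j M x : ℕ) (hM : 1 ≤ M) :
    ∑ s ∈ Finset.range (M+1),
      (-1:ℝ)^s * (((j+s).choose j : ℕ) : ℝ) * ((x.choose (j+s) : ℕ) : ℝ)
    = (if x = j then 1 else 0)
      + (-1:ℝ)^M * ((x.choose j : ℕ) : ℝ) * (((x - j - 1).choose M : ℕ) : ℝ) := by
  rcases lt_trichotomy x j with h | h | h
  · rw [if_neg (by omega)]
    rw [Nat.choose_eq_zero_of_lt h]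
    rw [Finset.sum_eq_zero]
    · simp
    · intro s hs
      rw [Nat.choose_eq_zero_of_lt (by omega : x < j + s)]
      simp
  · subst h
    rw [if_pos rfl]
    have : x - x - 1 = 0 := by omega
    rw [this, Nat.choose_eq_zero_of_lt (by omega : 0 < M)]
    rw [Finset.sum_eq_single 0]
    · simp
    · intro s hs hne
      rw [Nat.choose_eq_zero_of_lt (by omega : x < x + s)]
      simp
    · simp
  · rw [if_neg (by omega)]
    obtain ⟨y, rfl⟩ : ∃ y, x = j + 1 + y := ⟨x - j - 1, by omega⟩
    have hsub : j + 1 + y - j - 1 = y := by omega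
    rw [hsub]
    simpa using keyA j y M

lemma exp_hasSum (x : ℝ) : HasSum (fun n : ℕ => x ^ n / (n.factorial : ℝ)) (Real.exp x) := by
  have h := (Real.summable_pow_div_factorial x).hasSum
  have : ∑' n : ℕ, x ^ n / (n.factorial : ℝ) = Real.exp x := by
    rw [Real.exp_eq_exp_ℝ, NormedSpace.exp_eq_tsum_div]
  rwa [this] at h

theorem poisson_method_of_moments
    {Ω : Type*} [MeasurableSpace Ω] (μ : Measure Ω) [IsProbabilityMeasure μ]
    (X : ℕ → Ω → ℕ) (hX : ∀ n, Measurable (X n))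
    (hint : ∀ n k : ℕ,
      Integrable (fun ω => ∏ i ∈ Finset.range (k + 1), ((X n ω : ℝ) - (i : ℝ))) μ)
    (lam : ℝ) (hlam : 0 < lam)
    (hmom : ∀ k : ℕ,
      Tendsto (fun n => ∫ ω, ∏ i ∈ Finset.range (k + 1), ((X n ω : ℝ) - (i : ℝ)) ∂μ)
        atTop (nhds (lam ^ (k + 1)))) :
    ∀ j : ℕ,
      Tendsto (fun n => (μ {ω | X n ω = j}).toReal) atTop
        (nhds (Real.exp (-lam) * lam ^ j / (j.factorial : ℝ))) := by
  intro j
  set L : ℝ := Real.exp (-lam) * lam ^ j / (j.factorial : ℝ) with hL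
  -- choose functions are integrable
  have hfac : ∀ n : ℕ, (Nat.factorial n : ℝ) ≠ 0 :=
    fun n => Nat.cast_ne_zero.2 (Nat.factorial_ne_zero n)
  have hchoose_eq : ∀ (n : ℕ) (k : ℕ) (ω : Ω),
      ((X n ω).choose (k+1) : ℝ)
        = (∏ i ∈ Finset.range (k + 1), ((X n ω : ℝ) - (i : ℝ))) / ((k+1).factorial : ℝ) := by
    intro n k ω
    rw [← cast_descFactorial_prod, Nat.descFactorial_eq_factorial_mul_choose]
    push_cast
    field_simp
  have hIchoose : ∀ n r : ℕ, Integrable (fun ω => ((X n ω).choose r : ℝ)) μ := by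
    intro n r
    cases r with
    | zero => simpa using integrable_const (1:ℝ)
    | succ k =>
        have : (fun ω => ((X n ω).choose (k+1) : ℝ))
            = fun ω => (∏ i ∈ Finset.range (k + 1), ((X n ω : ℝ) - (i : ℝ))) / ((k+1).factorial : ℝ) :=
          funext (hchoose_eq n k)
        rw [this]
        exact (hint n k).div_const _
  -- binomial moments
  set b : ℕ → ℕ → ℝ := fun n r => ∫ ω, ((X n ω).choose r : ℝ) ∂μ with hb
  have hbt : ∀ r : ℕ, Tendsto (fun n => b n r) atTop (nhds (lam ^ r / (r.factorial : ℝ))) := by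
    intro r
    cases r with
    | zero =>
        have : (fun n => b n 0) = fun _ => (1:ℝ) := by
          funext n; simp [hb]
        rw [this]; simpa using tendsto_const_nhds
    | succ k =>
        have heq : ∀ n, b n (k+1)
            = (∫ ω, ∏ i ∈ Finset.range (k + 1), ((X n ω : ℝ) - (i : ℝ)) ∂μ) / ((k+1).factorial : ℝ) := by
          intro n
          simp only [hb]
          rw [← integral_div]
          exact integral_congr_ae (Filter.Eventually.of_forall fun ω => hchoose_eq n k ω)
        simp only [heq]
        exact (hmom k).div_const _
  -- probability as integral
  have hP : ∀ n, (μ {ω | X n ω = j}).toReal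
      = ∫ ω, (if X n ω = j then (1:ℝ) else 0) ∂μ := by
    intro n
    have hs : MeasurableSet {ω | X n ω = j} := (hX n) (measurableSet_singleton j)
    rw [← measureReal_def, ← MeasureTheory.integral_indicator_one hs]
    refine integral_congr_ae (Filter.Eventually.of_forall fun ω => ?_)
    by_cases h : X n ω = j <;> simp [Set.indicator, h]
  -- integrability of indicator
  have hIind : ∀ n, Integrable (fun ω => (if X n ω = j then (1:ℝ) else 0)) μ := by
    intro n
    have hs : MeasurableSet {ω | X n ω = j} := (hX n) (measurableSet_singleton j)
    have : Integrable ({ω | X n ω = j}.indicator (fun _ => (1:ℝ))) μ :=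
      (integrable_const (1:ℝ)).indicator hs
    refine this.congr (Filter.Eventually.of_forall fun ω => ?_)
    by_cases h : X n ω = j <;> simp [Set.indicator, h]
  -- remainder function and integrability
  have hRmeas : ∀ (n M : ℕ), AEStronglyMeasurable
      (fun ω => ((X n ω).choose j : ℝ) * (((X n ω) - j - 1).choose M : ℝ)) μ := by
    intro n M
    exact ((measurable_from_top
      (f := fun x : ℕ => ((x.choose j : ℝ) * (((x - j - 1).choose M : ℝ))))).comp
      (hX n)).aestronglyMeasurable
  have hRle : ∀ (M x : ℕ), (x.choose j : ℝ) * ((x - j - 1).choose M : ℝ)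
      ≤ ((j+M).choose j : ℝ) * (x.choose (j+M) : ℝ) := by
    intro M x
    have h1 : ((x - j - 1).choose M : ℝ) ≤ ((x - j).choose M : ℝ) := by
      exact_mod_cast Nat.choose_le_choose M (by omega : x - j - 1 ≤ x - j)
    calc (x.choose j : ℝ) * ((x - j - 1).choose M : ℝ)
        ≤ (x.choose j : ℝ) * ((x - j).choose M : ℝ) := by
          apply mul_le_mul_of_nonneg_left h1 (by positivity)
      _ = ((j+M).choose j : ℝ) * (x.choose (j+M) : ℝ) := by
          rw [choose_mul_choose_cast]; ring
  have hIR : ∀ (n M : ℕ),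
      Integrable (fun ω => ((X n ω).choose j : ℝ) * (((X n ω) - j - 1).choose M : ℝ)) μ := by
    intro n M
    refine Integrable.mono' (((hIchoose n (j+M)).const_mul (((j+M).choose j : ℝ)))) (hRmeas n _)
      (Filter.Eventually.of_forall fun ω => ?_)
    rw [Real.norm_eq_abs, abs_of_nonneg (by positivity)]
    exact hRle M (X n ω)
  -- main identity
  have hmain : ∀ (n M : ℕ), 1 ≤ M →
      ∑ s ∈ Finset.range (M+1), (-1:ℝ)^s * (((j+s).choose j : ℕ) : ℝ) * b n (j+s)
      = (μ {ω | X n ω = j}).toReal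
        + (-1:ℝ)^M * ∫ ω, ((X n ω).choose j : ℝ) * (((X n ω) - j - 1).choose M : ℝ) ∂μ := by
    intro n M hM
    have lhs_eq : ∑ s ∈ Finset.range (M+1), (-1:ℝ)^s * (((j+s).choose j : ℕ) : ℝ) * b n (j+s)
        = ∫ ω, ∑ s ∈ Finset.range (M+1),
            (-1:ℝ)^s * (((j+s).choose j : ℕ) : ℝ) * ((X n ω).choose (j+s) : ℝ) ∂μ := by
      rw [integral_finset_sum]
      · refine Finset.sum_congr rfl fun s _ => ?_
        rw [hb]
        rw [← integral_const_mul]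
      · intro s _
        exact ((hIchoose n (j+s)).const_mul _)
    rw [lhs_eq, hP n]
    have ptwise : ∀ ω, (∑ s ∈ Finset.range (M+1),
        (-1:ℝ)^s * (((j+s).choose j : ℕ) : ℝ) * ((X n ω).choose (j+s) : ℝ))
        = (if X n ω = j then (1:ℝ) else 0)
          + (-1:ℝ)^M * (((X n ω).choose j : ℝ) * (((X n ω) - j - 1).choose M : ℝ)) := by
      intro ω
      have := key j M (X n ω) hM
      rw [this]; ring
    rw [integral_congr_ae (Filter.Eventually.of_forall ptwise)]
    rw [integral_add (hIind n) (((hIR n M)).const_mul _)]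
    rw [integral_const_mul]
  -- error bound
  have herr : ∀ (n M : ℕ),
      |∫ ω, ((X n ω).choose j : ℝ) * (((X n ω) - j - 1).choose M : ℝ) ∂μ|
        ≤ ((j+M).choose j : ℝ) * b n (j+M) := by
    intro n M
    have h1 : |∫ ω, ((X n ω).choose j : ℝ) * (((X n ω) - j - 1).choose M : ℝ) ∂μ|
        ≤ ∫ ω, |((X n ω).choose j : ℝ) * (((X n ω) - j - 1).choose M : ℝ)| ∂μ := by
      simpa only [Real.norm_eq_abs] using norm_integral_le_integral_norm
        (f := fun ω => ((X n ω).choose j : ℝ) * (((X n ω) - j - 1).choose M : ℝ)) (μ := μ)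
    refine h1.trans ?_
    have h2 : ∀ ω, |((X n ω).choose j : ℝ) * (((X n ω) - j - 1).choose M : ℝ)|
        ≤ ((j+M).choose j : ℝ) * ((X n ω).choose (j+M) : ℝ) := by
      intro ω
      rw [abs_of_nonneg (by positivity)]
      exact hRle M (X n ω)
    calc ∫ ω, |((X n ω).choose j : ℝ) * (((X n ω) - j - 1).choose M : ℝ)| ∂μ
        ≤ ∫ ω, ((j+M).choose j : ℝ) * ((X n ω).choose (j+M) : ℝ) ∂μ := by
          refine integral_mono_ae ((hIR n M).abs) ((hIchoose n (j+M)).const_mul _)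
            (Filter.Eventually.of_forall h2)
      _ = ((j+M).choose j : ℝ) * b n (j+M) := by rw [integral_const_mul]
  -- target partial sums
  set T : ℕ → ℝ := fun M => ∑ s ∈ Finset.range (M+1),
      (-1:ℝ)^s * (((j+s).choose j : ℕ) : ℝ) * (lam ^ (j+s) / ((j+s).factorial : ℝ)) with hT
  have hterm : ∀ s : ℕ, (-1:ℝ)^s * (((j+s).choose j : ℕ) : ℝ) * (lam ^ (j+s) / ((j+s).factorial : ℝ))
      = (lam ^ j / (j.factorial : ℝ)) * ((-lam) ^ s / (s.factorial : ℝ)) := by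
    intro s
    rw [Nat.cast_choose ℝ (Nat.le_add_right j s), (by omega : j + s - j = s)]
    rw [neg_pow, pow_add]
    field_simp
    ring
  have hTlim : Tendsto T atTop (nhds L) := by
    have hsum := (exp_hasSum (-lam)).tendsto_sum_nat
    have : Tendsto (fun M : ℕ => ∑ s ∈ Finset.range (M+1), (-lam)^s / (s.factorial : ℝ))
        atTop (nhds (Real.exp (-lam))) :=
      hsum.comp (tendsto_add_atTop_nat 1)
    have h2 := this.const_mul (lam ^ j / (j.factorial : ℝ))
    have hTeq : T = fun M => (lam ^ j / (j.factorial : ℝ))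
        * ∑ s ∈ Finset.range (M+1), (-lam)^s / (s.factorial : ℝ) := by
      funext M
      rw [hT, Finset.mul_sum]
      exact Finset.sum_congr rfl fun s _ => hterm s
    rw [hTeq, hL]
    convert h2 using 2
    ring
  -- error terms tend to 0
  have heM : ∀ M : ℕ, ((j+M).choose j : ℝ) * (lam ^ (j+M) / ((j+M).factorial : ℝ))
      = (lam ^ j / (j.factorial : ℝ)) * (lam ^ M / (M.factorial : ℝ)) := by
    intro M
    rw [Nat.cast_choose ℝ (Nat.le_add_right j M), (by omega : j + M - j = M), pow_add]
    field_simp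
  have heMlim : Tendsto (fun M : ℕ => ((j+M).choose j : ℝ) * (lam ^ (j+M) / ((j+M).factorial : ℝ)))
      atTop (nhds 0) := by
    simp only [heM]
    have := (FloorSemiring.tendsto_pow_div_factorial_atTop lam).const_mul (lam ^ j / (j.factorial : ℝ))
    simpa using this
  -- epsilon argument
  rw [Metric.tendsto_nhds]
  intro ε hε
  -- pick M
  have hev : ∀ᶠ M : ℕ in atTop, |T M - L| < ε/4
      ∧ ((j+M).choose j : ℝ) * (lam ^ (j+M) / ((j+M).factorial : ℝ)) < ε/8 ∧ 1 ≤ M := by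
    have e1 : ∀ᶠ M : ℕ in atTop, |T M - L| < ε/4 := by
      have := hTlim
      rw [Metric.tendsto_nhds] at this
      simpa [Real.dist_eq] using this (ε/4) (by linarith)
    have e2 : ∀ᶠ M : ℕ in atTop,
        ((j+M).choose j : ℝ) * (lam ^ (j+M) / ((j+M).factorial : ℝ)) < ε/8 := by
      have := heMlim
      rw [Metric.tendsto_nhds] at this
      filter_upwards [this (ε/8) (by linarith)] with M hM
      rw [Real.dist_eq, sub_zero] at hM
      exact (le_abs_self _).trans_lt hM
    filter_upwards [e1, e2, eventually_ge_atTop 1] with M h1 h2 h3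
    exact ⟨h1, h2, h3⟩
  obtain ⟨M, hM1, hM2, hM3⟩ := hev.exists
  -- eventually in n
  have hn1 : ∀ᶠ n : ℕ in atTop,
      |(∑ s ∈ Finset.range (M+1), (-1:ℝ)^s * (((j+s).choose j : ℕ) : ℝ) * b n (j+s)) - T M| < ε/4 := by
    have ht : Tendsto (fun n => ∑ s ∈ Finset.range (M+1),
        (-1:ℝ)^s * (((j+s).choose j : ℕ) : ℝ) * b n (j+s)) atTop (nhds (T M)) := by
      rw [hT]
      exact tendsto_finset_sum _ fun s _ => (hbt (j+s)).const_mul _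
    rw [Metric.tendsto_nhds] at ht
    simpa [Real.dist_eq] using ht (ε/4) (by linarith)
  have hn2 : ∀ᶠ n : ℕ in atTop, ((j+M).choose j : ℝ) * b n (j+M) < ε/4 := by
    have ht := (hbt (j+M)).const_mul (((j+M).choose j : ℝ))
    rw [Metric.tendsto_nhds] at ht
    filter_upwards [ht (ε/8) (by linarith)] with n hn
    rw [Real.dist_eq] at hn
    have := abs_sub_abs_le_abs_sub (((j+M).choose j : ℝ) * b n (j+M))
      (((j+M).choose j : ℝ) * (lam ^ (j+M) / ((j+M).factorial : ℝ)))
    have hb0 : ((j+M).choose j : ℝ) * b n (j+M) ≤ |((j+M).choose j : ℝ) * b n (j+M)| := le_abs_self _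
    have habs : |((j+M).choose j : ℝ) * (lam ^ (j+M) / ((j+M).factorial : ℝ))|
        = ((j+M).choose j : ℝ) * (lam ^ (j+M) / ((j+M).factorial : ℝ)) := by
      rw [abs_of_nonneg (by positivity)]
    nlinarith [abs_nonneg (((j+M).choose j : ℝ) * b n (j+M) - ((j+M).choose j : ℝ) * (lam ^ (j+M) / ((j+M).factorial : ℝ)))]
  filter_upwards [hn1, hn2] with n h1 h2
  rw [Real.dist_eq]
  have hid := hmain n M hM3
  have herr' := herr n M
  have hsplit : (μ {ω | X n ω = j}).toReal - L
      = ((∑ s ∈ Finset.range (M+1), (-1:ℝ)^s * (((j+s).choose j : ℕ) : ℝ) * b n (j+s)) - T M)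
        + (T M - L)
        - (-1:ℝ)^M * ∫ ω, ((X n ω).choose j : ℝ) * (((X n ω) - j - 1).choose M : ℝ) ∂μ := by
    rw [hid]; ring
  rw [hsplit]
  have habs : |(-1:ℝ)^M * ∫ ω, ((X n ω).choose j : ℝ) * (((X n ω) - j - 1).choose M : ℝ) ∂μ|
      ≤ ((j+M).choose j : ℝ) * b n (j+M) := by
    rw [abs_mul, abs_pow, abs_neg, abs_one, one_pow, one_mul]
    exact herr'
  calc |_| ≤ |(∑ s ∈ Finset.range (M+1), (-1:ℝ)^s * (((j+s).choose j : ℕ) : ℝ) * b n (j+s)) - T M|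
        + |T M - L|
        + |(-1:ℝ)^M * ∫ ω, ((X n ω).choose j : ℝ) * (((X n ω) - j - 1).choose M : ℝ) ∂μ| := by
          exact (abs_sub _ _).trans (by gcongr; exact abs_add_le _ _) |>.trans (le_refl _)
    _ < ε := by
        have hnn : (0:ℝ) ≤ ((j+M).choose j : ℝ) * b n (j+M) := le_trans (abs_nonneg _) habs
        linarith [habs.trans_lt h2]
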